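/- Let λ : ℕ → ℝ be a nonincreasing summable sequence with λ₀ = 1 and 0 ≤ λᵢ ≤ 1 for all i, and 0 < λ₁ < 1. Suppose λ₁ has multiplicity m ≥ 1, i.e. λ₁ = λ₂ = ⋯ = λ_m > λ_{m+1}. For k ≥ 1 set s_k = Σ_{i=0}^∞ λᵢ^k and u_k = (s_k − 1)^{1/k}. Then there exists a constant C > 0 such that for all k ≥ 1, |u_k − λ₁ · m^{1/k}| ≤ C · k^{−1} · (λ_{m+1}/λ₁)^{k}. In particular, if m = 1 then u_k − λ₁ = O(k^{−1}(λ₂/λ₁)^k), while if m > 1 then u_k − λ₁ = O(k^{−1}). -/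

import Mathlib

set_option maxHeartbeats 1000000 in


/-- Suppose `0 < l 1 < 1` and `l 1` has multiplicity `m ≥ 1`.
With `s k = ∑' i, (l i) ^ k` and `u k = (s k - 1) ^ (1/k)`, there is a
constant `C > 0` with `|u k - l 1 * m ^ (1/k)| ≤ C * k⁻¹ * (l (m+1)/l 1) ^ k`
for all `k ≥ 1`.  In particular, if `m = 1` then
`u k - l 1 = O(k⁻¹ (l 2 / l 1) ^ k)`, while if `m > 1` then
`u k - l 1 = O(k⁻¹)`. -/
theorem upper_bound_rate
    (l : ℕ → ℝ) (hmono : Antitone l) (hsum : Summable l)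
    (h0 : l 0 = 1) (hbd : ∀ i, 0 ≤ l i ∧ l i ≤ 1)
    (hpos : 0 < l 1) (h1 : l 1 < 1)
    (m : ℕ) (hm : 1 ≤ m)
    (hmult : ∀ i : ℕ, 1 ≤ i → i ≤ m → l i = l 1)
    (hgap : l (m + 1) < l 1)
    (s : ℕ → ℝ) (hs : ∀ k : ℕ, 1 ≤ k → s k = ∑' i, (l i) ^ k)
    (u : ℕ → ℝ) (hu : ∀ k : ℕ, 1 ≤ k → u k = (s k - 1) ^ ((1 : ℝ) / k)) :
    (∃ C : ℝ, 0 < C ∧ ∀ k : ℕ, 1 ≤ k →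
      |u k - l 1 * (m : ℝ) ^ ((1 : ℝ) / k)| ≤ C * (k : ℝ)⁻¹ * (l (m + 1) / l 1) ^ k) ∧
    (m = 1 → ∃ C : ℝ, 0 < C ∧ ∀ k : ℕ, 1 ≤ k →
      |u k - l 1| ≤ C * (k : ℝ)⁻¹ * (l 2 / l 1) ^ k) ∧
    (1 < m → ∃ C : ℝ, 0 < C ∧ ∀ k : ℕ, 1 ≤ k →
      |u k - l 1| ≤ C * (k : ℝ)⁻¹) := by
  have hnn : ∀ i, 0 ≤ l i := fun i => (hbd i).1
  have hle1 : ∀ i, l i ≤ 1 := fun i => (hbd i).2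
  -- summability of powers
  have hsummk : ∀ k : ℕ, 1 ≤ k → Summable (fun i => l i ^ k) := by
    intro k hk
    refine hsum.of_nonneg_of_le (fun i => pow_nonneg (hnn i) k) (fun i => ?_)
    calc l i ^ k ≤ l i ^ 1 := pow_le_pow_of_le_one (hnn i) (hle1 i) hk
    _ = l i := pow_one _
  set R : ℕ → ℝ := fun k => ∑' i, l (i + (m + 1)) ^ k with hRdef
  have hsummR : ∀ k : ℕ, 1 ≤ k → Summable (fun i => l (i + (m + 1)) ^ k) :=
    fun k hk => (summable_nat_add_iff (m + 1)).2 (hsummk k hk)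
  have hRnn : ∀ k, 0 ≤ R k := fun k => tsum_nonneg fun i => pow_nonneg (hnn _) k
  -- decomposition
  have hdecomp : ∀ k : ℕ, 1 ≤ k → s k - 1 = (m : ℝ) * l 1 ^ k + R k := by
    intro k hk
    have hsplit := Summable.sum_add_tsum_nat_add (f := fun i => l i ^ k) (m + 1) (hsummk k hk)
    have hsumfin : ∑ i ∈ Finset.range (m + 1), l i ^ k = 1 + (m : ℝ) * l 1 ^ k := by
      rw [Finset.sum_range_succ']
      have hcong : ∀ i ∈ Finset.range m, l (i + 1) ^ k = l 1 ^ k := by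
        intro i hi
        rw [hmult (i + 1) (by omega) (by have := Finset.mem_range.1 hi; omega)]
      rw [Finset.sum_congr rfl hcong, Finset.sum_const, h0, one_pow, nsmul_eq_mul,
        Finset.card_range]
      ring
    rw [hs k hk, ← hsplit, hsumfin]
    ring
  have hknz : ∀ k : ℕ, 1 ≤ k → ((k : ℝ) ≠ 0) := fun k hk => Nat.cast_ne_zero.2 (by omega)
  have hkinv_pos : ∀ k : ℕ, 1 ≤ k → (0 : ℝ) < (1 : ℝ) / k := by
    intro k hk
    have : (0:ℝ) < (k:ℝ) := by exact_mod_cast Nat.lt_of_lt_of_le Nat.zero_lt_one hk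
    positivity
  have hkinv_le1 : ∀ k : ℕ, 1 ≤ k → (1 : ℝ) / k ≤ 1 := by
    intro k hk
    have : (1:ℝ) ≤ (k:ℝ) := by exact_mod_cast hk
    rw [div_le_one (by linarith)]
    exact this
  have hmpos : (0:ℝ) < (m:ℝ) := by exact_mod_cast Nat.lt_of_lt_of_le Nat.zero_lt_one hm
  have hm1 : (1:ℝ) ≤ (m:ℝ) := by exact_mod_cast hm
  -- base computation
  have hbase : ∀ k : ℕ, 1 ≤ k →
      ((m : ℝ) * l 1 ^ k) ^ ((1:ℝ)/k) = l 1 * (m : ℝ) ^ ((1:ℝ)/k) := by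
    intro k hk
    rw [Real.mul_rpow (le_of_lt hmpos) (pow_nonneg hpos.le k)]
    rw [← Real.rpow_natCast (l 1) k, ← Real.rpow_mul hpos.le]
    rw [mul_one_div, div_self (hknz k hk), Real.rpow_one]
    ring
  -- lower bound
  have hlow : ∀ k : ℕ, 1 ≤ k → l 1 * (m : ℝ) ^ ((1:ℝ)/k) ≤ u k := by
    intro k hk
    rw [hu k hk, ← hbase k hk]
    apply Real.rpow_le_rpow (by positivity)
    · rw [hdecomp k hk]; linarith [hRnn k]
    · exact (hkinv_pos k hk).le
  -- upper bound in terms of R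
  have hup : ∀ k : ℕ, 1 ≤ k →
      u k - l 1 * (m : ℝ) ^ ((1:ℝ)/k) ≤ l 1 * (m : ℝ) ^ ((1:ℝ)/k) * ((1:ℝ)/k * (R k / ((m : ℝ) * l 1 ^ k))) := by
    intro k hk
    have hB : (0:ℝ) < (m : ℝ) * l 1 ^ k := by positivity
    set x : ℝ := R k / ((m : ℝ) * l 1 ^ k) with hxdef
    have hx : 0 ≤ x := div_nonneg (hRnn k) hB.le
    have hfact : s k - 1 = ((m : ℝ) * l 1 ^ k) * (1 + x) := by
      rw [hdecomp k hk, hxdef]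
      field_simp
    have : u k ≤ l 1 * (m : ℝ) ^ ((1:ℝ)/k) * (1 + (1:ℝ)/k * x) := by
      rw [hu k hk, hfact, Real.mul_rpow hB.le (by linarith), hbase k hk]
      apply mul_le_mul_of_nonneg_left _ (by positivity)
      exact rpow_one_add_le_one_add_mul_self (by linarith) (hkinv_pos k hk).le (hkinv_le1 k hk)
    nlinarith [this]
  -- main part
  have hmain : ∃ C : ℝ, 0 < C ∧ ∀ k : ℕ, 1 ≤ k →
      |u k - l 1 * (m : ℝ) ^ ((1 : ℝ) / k)| ≤ C * (k : ℝ)⁻¹ * (l (m + 1) / l 1) ^ k := by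
    set T : ℝ := ∑' i, l (i + (m + 1)) with hTdef
    have hTnn : 0 ≤ T := tsum_nonneg fun i => hnn _
    have hsummT : Summable (fun i => l (i + (m + 1))) := (summable_nat_add_iff (m + 1)).2 hsum
    rcases eq_or_lt_of_le (hnn (m + 1)) with hz | hz
    · -- l (m+1) = 0
      refine ⟨1, one_pos, fun k hk => ?_⟩
      have hRz : R k = 0 := by
        have hfz : (fun i => l (i + (m + 1)) ^ k) = fun _ => (0:ℝ) := by
          funext i
          have h1 : l (i + (m + 1)) ≤ l (m + 1) := hmono (Nat.le_add_left _ _)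
          have h2 : l (i + (m + 1)) = 0 := le_antisymm (by rw [← hz] at h1; exact h1) (hnn _)
          rw [h2, zero_pow (by omega)]
        show (∑' (i : ℕ), l (i + (m + 1)) ^ k) = 0
        rw [hfz, tsum_zero]
      have hexact : u k = l 1 * (m : ℝ) ^ ((1:ℝ)/k) := by
        rw [hu k hk, hdecomp k hk, hRz, add_zero, hbase k hk]
      rw [hexact, sub_self, abs_zero, ← hz]
      have : ((0:ℝ) / l 1) ^ k = 0 := by
        rw [zero_div, zero_pow (by omega)]
      rw [this, mul_zero]
    · -- l (m+1) > 0
      have hRbound : ∀ k : ℕ, 1 ≤ k → R k ≤ l (m + 1) ^ (k - 1) * T := by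
        intro k hk
        have hterm : ∀ i, l (i + (m + 1)) ^ k ≤ l (m + 1) ^ (k - 1) * l (i + (m + 1)) := by
          intro i
          have hle : l (i + (m + 1)) ≤ l (m + 1) := hmono (Nat.le_add_left _ _)
          calc l (i + (m + 1)) ^ k = l (i + (m + 1)) ^ (k - 1) * l (i + (m + 1)) := by
                rw [← pow_succ]; congr 1; omega
          _ ≤ l (m + 1) ^ (k - 1) * l (i + (m + 1)) :=
              mul_le_mul_of_nonneg_right (pow_le_pow_left₀ (hnn _) hle _) (hnn _)
        calc R k ≤ ∑' i, l (m + 1) ^ (k - 1) * l (i + (m + 1)) :=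
              Summable.tsum_le_tsum hterm (hsummR k hk) (hsummT.mul_left _)
        _ = l (m + 1) ^ (k - 1) * T := tsum_mul_left
      refine ⟨max 1 (l 1 * T / l (m + 1)), lt_max_of_lt_left one_pos, fun k hk => ?_⟩
      have hq : (0:ℝ) < l (m + 1) / l 1 := div_pos hz hpos
      have hB : (0:ℝ) < (m : ℝ) * l 1 ^ k := by positivity
      have habs : |u k - l 1 * (m : ℝ) ^ ((1:ℝ)/k)| = u k - l 1 * (m : ℝ) ^ ((1:ℝ)/k) :=
        abs_of_nonneg (by linarith [hlow k hk])
      rw [habs]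
      refine le_trans (hup k hk) ?_
      have hxbd : R k / ((m : ℝ) * l 1 ^ k) ≤ T / ((m:ℝ) * l (m + 1)) * (l (m + 1) / l 1) ^ k := by
        rw [div_le_iff₀ hB]
        calc R k ≤ l (m + 1) ^ (k - 1) * T := hRbound k hk
        _ = T / ((m:ℝ) * l (m + 1)) * (l (m + 1) / l 1) ^ k * ((m : ℝ) * l 1 ^ k) := by
            rw [div_pow]
            have hk1 : l (m+1) ^ (k-1) * l (m+1) = l (m+1) ^ k := by
              rw [← pow_succ]; congr 1; omega
            field_simp
            linear_combination T * hk1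
      have hmk : (m : ℝ) ^ ((1:ℝ)/k) ≤ (m:ℝ) := by
        calc (m : ℝ) ^ ((1:ℝ)/k) ≤ (m:ℝ) ^ (1:ℝ) :=
              Real.rpow_le_rpow_of_exponent_le hm1 (hkinv_le1 k hk)
        _ = (m:ℝ) := Real.rpow_one _
      have hmkpos : (0:ℝ) < (m : ℝ) ^ ((1:ℝ)/k) := Real.rpow_pos_of_pos hmpos _
      have hqk : (0:ℝ) ≤ (l (m + 1) / l 1) ^ k := le_of_lt (pow_pos hq k)
      have hkinv : (1:ℝ)/k = (k:ℝ)⁻¹ := one_div _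
      calc l 1 * (m : ℝ) ^ ((1:ℝ)/k) * ((1:ℝ)/k * (R k / ((m : ℝ) * l 1 ^ k)))
          ≤ l 1 * (m:ℝ) * ((1:ℝ)/k * (T / ((m:ℝ) * l (m + 1)) * (l (m + 1) / l 1) ^ k)) := by
            apply mul_le_mul
            · exact mul_le_mul_of_nonneg_left hmk hpos.le
            · apply mul_le_mul_of_nonneg_left hxbd (hkinv_pos k hk).le
            · exact mul_nonneg (hkinv_pos k hk).le (div_nonneg (hRnn k) hB.le)
            · positivity
      _ = (l 1 * T / l (m + 1)) * (k:ℝ)⁻¹ * (l (m + 1) / l 1) ^ k := by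
            rw [← hkinv]; field_simp
      _ ≤ max 1 (l 1 * T / l (m + 1)) * (k:ℝ)⁻¹ * (l (m + 1) / l 1) ^ k := by
            apply mul_le_mul_of_nonneg_right _ hqk
            apply mul_le_mul_of_nonneg_right (le_max_right _ _) (by positivity)
  obtain ⟨C, hC, hCbd⟩ := hmain
  refine ⟨⟨C, hC, hCbd⟩, ?_, ?_⟩
  · rintro rfl
    refine ⟨C, hC, fun k hk => ?_⟩
    have := hCbd k hk
    simpa using this
  · intro hm2
    refine ⟨C + l 1 * m, by positivity, fun k hk => ?_⟩
    have hq0 : (0:ℝ) ≤ l (m + 1) / l 1 := div_nonneg (hnn _) hpos.le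
    have hq1 : l (m + 1) / l 1 ≤ 1 := (div_le_one hpos).2 hgap.le
    have hqk : (l (m + 1) / l 1) ^ k ≤ 1 := pow_le_one₀ hq0 hq1
    have h1' := hCbd k hk
    have hkinvpos : (0:ℝ) ≤ (k:ℝ)⁻¹ := by positivity
    have hbd1 : |u k - l 1 * (m : ℝ) ^ ((1:ℝ)/k)| ≤ C * (k:ℝ)⁻¹ := by
      refine le_trans h1' ?_
      calc C * (k:ℝ)⁻¹ * (l (m + 1) / l 1) ^ k ≤ C * (k:ℝ)⁻¹ * 1 :=
            mul_le_mul_of_nonneg_left hqk (by positivity)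
      _ = C * (k:ℝ)⁻¹ := mul_one _
    have hmk1 : (1:ℝ) ≤ (m : ℝ) ^ ((1:ℝ)/k) :=
      Real.one_le_rpow hm1 (hkinv_pos k hk).le
    have hmkub : (m : ℝ) ^ ((1:ℝ)/k) ≤ 1 + (1:ℝ)/k * ((m:ℝ) - 1) := by
      have := rpow_one_add_le_one_add_mul_self (s := (m:ℝ) - 1) (by linarith)
        (hkinv_pos k hk).le (hkinv_le1 k hk)
      simpa using this
    have hbd2 : |l 1 * (m : ℝ) ^ ((1:ℝ)/k) - l 1| ≤ l 1 * m * (k:ℝ)⁻¹ := by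
      rw [abs_of_nonneg (by nlinarith)]
      have hkinv : (1:ℝ)/k = (k:ℝ)⁻¹ := one_div _
      have : l 1 * (m : ℝ) ^ ((1:ℝ)/k) - l 1 ≤ l 1 * ((1:ℝ)/k * ((m:ℝ) - 1)) := by
        nlinarith
      refine le_trans this ?_
      rw [hkinv]
      nlinarith [hkinvpos]
    calc |u k - l 1| ≤ |u k - l 1 * (m : ℝ) ^ ((1:ℝ)/k)| + |l 1 * (m : ℝ) ^ ((1:ℝ)/k) - l 1| := by
          have := abs_sub_abs_le_abs_sub (u k - l 1) (u k - l 1 * (m : ℝ) ^ ((1:ℝ)/k))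
          calc |u k - l 1| = |(u k - l 1 * (m : ℝ) ^ ((1:ℝ)/k)) + (l 1 * (m : ℝ) ^ ((1:ℝ)/k) - l 1)| := by ring_nf
          _ ≤ _ := abs_add_le _ _
    _ ≤ C * (k:ℝ)⁻¹ + l 1 * m * (k:ℝ)⁻¹ := add_le_add hbd1 hbd2
    _ = (C + l 1 * m) * (k:ℝ)⁻¹ := by ring
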